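/- Let κ, b, m, ε, p ∈ ℝ with p ≠ 0. Suppose u : ℝ → ℝ → ℝ is C² on ℝ × (0,∞) and satisfies u_t(t,r) = κ·p·exp(p·u_r(t,r))·u_rr(t,r) + (m/r)·κ·exp(p·u_r(t,r)) + b for all t ∈ ℝ and r > 0. Define v(t,r) = b·exp(−p·ε)·(exp(p·ε) − 1)·t − ε·r + u(exp(−p·ε)·t, r). Then v satisfies the same equation, v_t(t,r) = κ·p·exp(p·v_r(t,r))·v_rr(t,r) + (m/r)·κ·exp(p·v_r(t,r)) + b, for all t ∈ ℝ and r > 0. -/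

import Mathlib

noncomputable section

/-- Partial derivative in the first (time) variable. -/
def partial_t (u : ℝ → ℝ → ℝ) (t r : ℝ) : ℝ := deriv (fun s => u s r) t

/-- Partial derivative in the second (space) variable. -/
def partial_r (u : ℝ → ℝ → ℝ) (t r : ℝ) : ℝ := deriv (fun s => u t s) r

/-- Second partial derivative in the second (space) variable. -/
def partial_rr (u : ℝ → ℝ → ℝ) (t r : ℝ) : ℝ := deriv (deriv (fun s => u t s)) r

/-- Mixed partial derivative: first in space, then in time. -/
def partial_tr (u : ℝ → ℝ → ℝ) (t r : ℝ) : ℝ := deriv (fun s => deriv (fun y => u s y) r) t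

/-- `u` is C² on ℝ × (0,∞): `u`, `u_t`, `u_r`, `u_rr` and the mixed partial `u_tr`
exist and are continuous there. -/
def IsC2On (u : ℝ → ℝ → ℝ) : Prop :=
  (∀ t r : ℝ, 0 < r → DifferentiableAt ℝ (fun s => u s r) t) ∧
  (∀ t r : ℝ, 0 < r → DifferentiableAt ℝ (fun s => u t s) r) ∧
  (∀ t r : ℝ, 0 < r → DifferentiableAt ℝ (deriv (fun s => u t s)) r) ∧
  (∀ t r : ℝ, 0 < r → DifferentiableAt ℝ (fun s => deriv (fun y => u s y) r) t) ∧
  ContinuousOn (fun q : ℝ × ℝ => u q.1 q.2) {q : ℝ × ℝ | 0 < q.2} ∧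
  ContinuousOn (fun q : ℝ × ℝ => partial_t u q.1 q.2) {q : ℝ × ℝ | 0 < q.2} ∧
  ContinuousOn (fun q : ℝ × ℝ => partial_r u q.1 q.2) {q : ℝ × ℝ | 0 < q.2} ∧
  ContinuousOn (fun q : ℝ × ℝ => partial_rr u q.1 q.2) {q : ℝ × ℝ | 0 < q.2} ∧
  ContinuousOn (fun q : ℝ × ℝ => partial_tr u q.1 q.2) {q : ℝ × ℝ | 0 < q.2}

/-- The dilation with time- and space-dependent shift point symmetry X₂₂ of the
1-dimensional nonlinear diffusion-reaction equation with exponential diffusivity. -/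
theorem symmetry_X22 (κ b m ε p : ℝ) (hp : p ≠ 0)
    (u : ℝ → ℝ → ℝ) (hu : IsC2On u)
    (hpde : ∀ t r : ℝ, 0 < r →
      partial_t u t r
        = κ * p * Real.exp (p * partial_r u t r) * partial_rr u t r
          + (m / r) * κ * Real.exp (p * partial_r u t r) + b)
    (v : ℝ → ℝ → ℝ)
    (hv : ∀ t r : ℝ,
      v t r = b * Real.exp (-p * ε) * (Real.exp (p * ε) - 1) * t - ε * r
        + u (Real.exp (-p * ε) * t) r) :
    ∀ t r : ℝ, 0 < r →
      partial_t v t r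
        = κ * p * Real.exp (p * partial_r v t r) * partial_rr v t r
          + (m / r) * κ * Real.exp (p * partial_r v t r) + b := by
  intro t r hr
  obtain ⟨h1, h2, h3, -, -⟩ := hu
  set a : ℝ := Real.exp (-p * ε) with ha
  set c : ℝ := b * a * (Real.exp (p * ε) - 1) with hc
  have hae : a * Real.exp (p * ε) = 1 := by
    rw [ha, ← Real.exp_add]; ring_nf; exact Real.exp_zero
  -- time derivative of v
  have hvt : partial_t v t r = c + partial_t u (a * t) r * a := by
    have hfun : (fun s => v s r) = fun s => (c * s - ε * r) + u (a * s) r := by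
      funext s; rw [hv]
    have hlin : HasDerivAt (fun s : ℝ => c * s - ε * r) c t := by
      simpa using ((hasDerivAt_id t).const_mul c).sub_const (ε * r)
    have hg : HasDerivAt (fun s : ℝ => a * s) a t := by
      simpa using (hasDerivAt_id t).const_mul a
    have hcomp : HasDerivAt (fun s => u (a * s) r) (partial_t u (a * t) r * a) t :=
      (h1 (a * t) r hr).hasDerivAt.comp t hg
    rw [partial_t, hfun]
    exact (hlin.add hcomp).deriv
  -- space derivative of v at any point s > 0
  have hvr : ∀ s : ℝ, 0 < s →
      deriv (fun y => v t y) s = -ε + partial_r u (a * t) s := by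
    intro s hs
    have hfun : (fun y => v t y) = fun y => (c * t - ε * y) + u (a * t) y := by
      funext y; rw [hv]
    have hlin : HasDerivAt (fun y : ℝ => c * t - ε * y) (-ε) s := by
      simpa [Pi.sub_def] using (hasDerivAt_const s (c * t)).sub ((hasDerivAt_id s).const_mul ε)
    have hcomp : HasDerivAt (fun y => u (a * t) y) (partial_r u (a * t) s) s :=
      (h2 (a * t) s hs).hasDerivAt
    rw [hfun]
    exact (hlin.add hcomp).deriv
  have hvr' : partial_r v t r = -ε + partial_r u (a * t) r := hvr r hr
  -- second space derivative of v
  have hvrr : partial_rr v t r = partial_rr u (a * t) r := by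
    have heq : deriv (fun y => v t y) =ᶠ[nhds r]
        (fun s => -ε + deriv (fun y => u (a * t) y) s) := by
      filter_upwards [isOpen_Ioi.mem_nhds hr] with s hs
      exact hvr s hs
    rw [partial_rr, heq.deriv_eq, deriv_const_add]
    rfl
  -- conclude
  rw [hvt, hvr', hvrr, hpde (a * t) r hr]
  have hexp : Real.exp (p * (-ε + partial_r u (a * t) r))
      = a * Real.exp (p * partial_r u (a * t) r) := by
    rw [ha, ← Real.exp_add]; ring_nf
  rw [hexp, hc]
  have : b * a * Real.exp (p * ε) = b := by
    rw [mul_assoc, hae, mul_one]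
  nlinarith [this]
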